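/- For any C-sequence over κ, the number-of-steps function ρ₂ : [κ]² → ω is closed: for all β < κ and i ≤ ω, the set D_{≤i}(β) := {α < β : ρ₂(α,β) ≤ i} contains all of its accumulation points below β; that is, if A ⊆ D_{≤i}(β) and sup(A) = γ < β with γ a limit of A, then ρ₂(γ, β) ≤ i. -/

import Mathlib

open Cardinal Set Ordinal

noncomputable section

/-- `s` (a set in a `Type 1`, such as a set of ordinals) has small cardinality `μ`. -/
def HasCard {α : Type 1} (s : Set α) (μ : Cardinal.{0}) : Prop :=
  Cardinal.mk s = Cardinal.lift.{1, 0} μ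

/-- `a < b` for sets of ordinals: every element of `a` is below every element of `b`. -/
def SetLT (a b : Set Ordinal) : Prop := ∀ α ∈ a, ∀ β ∈ b, α < β

/-- `A` is a family of `κ`-many pairwise disjoint subsets of `κ`, each of cardinality `χ'`. -/
def IsDisjFamily (κ χ' : Cardinal) (A : Set (Set Ordinal)) : Prop :=
  (∀ a ∈ A, a ⊆ Set.Iio κ.ord ∧ HasCard a χ') ∧
    A.PairwiseDisjoint id ∧ HasCard A κ

/-- `A` is a family of `κ`-many pairwise disjoint subsets of `κ`, each of cardinality `< χ`. -/
def IsDisjFamilyLT (κ χ : Cardinal) (A : Set (Set Ordinal)) : Prop :=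
  (∀ a ∈ A, a ⊆ Set.Iio κ.ord ∧ Cardinal.mk a < Cardinal.lift.{1, 0} χ) ∧
    A.PairwiseDisjoint id ∧ HasCard A κ

/-- `c` is a coloring of pairs of ordinals below `κ` with colors `< θ`. -/
def IsColoring (κ θ : Cardinal) (c : Ordinal → Ordinal → Ordinal) : Prop :=
  ∀ α β : Ordinal, α < β → β < κ.ord → c α β < θ.ord

/-- `c` witnesses `U(κ, μ, θ, χ)`. -/
def WitnessU (κ μ θ χ : Cardinal) (c : Ordinal → Ordinal → Ordinal) : Prop :=
  IsColoring κ θ c ∧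
    ∀ χ' < χ, ∀ A : Set (Set Ordinal), IsDisjFamily κ χ' A →
      ∀ i < θ.ord, ∃ B ⊆ A, HasCard B μ ∧
        ∀ a ∈ B, ∀ b ∈ B, SetLT a b → ∀ α ∈ a, ∀ β ∈ b, i < c α β

/-- The principle `U(κ, μ, θ, χ)`. -/
def U (κ μ θ χ : Cardinal) : Prop := ∃ c, WitnessU κ μ θ χ c

/-- `D` is a club in (the ordinal) `o`: a closed and unbounded subset of `o`. -/
def IsClubOrd (D : Set Ordinal) (o : Ordinal) : Prop :=
  D ⊆ Set.Iio o ∧ (∀ α < o, ∃ β ∈ D, α ≤ β) ∧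
    ∀ γ < o, 0 < γ → (∀ x < γ, ∃ β ∈ D, x < β ∧ β < γ) → γ ∈ D

/-- `S` is stationary in `o`: it meets every club in `o`. -/
def IsStationaryOrd (S : Set Ordinal) (o : Ordinal) : Prop :=
  ∀ D, IsClubOrd D o → (S ∩ D).Nonempty

/-- A `C`-sequence over `κ`. -/
def IsCSeq (κ : Cardinal) (C : Ordinal → Set Ordinal) : Prop :=
  C 0 = ∅ ∧ (∀ α, C (α + 1) = {α}) ∧
    ∀ α < κ.ord, Order.IsSuccLimit α → IsClubOrd (C α) α

/-- The walk `Tr(α,β)` from `β` down to `α` along the `C`-sequence `C`. -/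
def walk (C : Ordinal → Set Ordinal) (α β : Ordinal) : ℕ → Ordinal
  | 0 => β
  | n + 1 =>
      if α < walk C α β n then sInf {γ ∈ C (walk C α β n) | α ≤ γ} else α

/-- `ρ₂(α,β)`: the number of steps of the walk from `β` down to `α`. -/
def rho2 (C : Ordinal → Set Ordinal) (α β : Ordinal) : ℕ :=
  sInf {n : ℕ | walk C α β n = α}

/-- `λ₂(α,β) = sup (α ∩ {sup (C_δ ∩ α) : δ ∈ im (tr (α,β))})`. -/
def lambda2 (C : Ordinal → Set Ordinal) (α β : Ordinal) : Ordinal :=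
  sSup {x : Ordinal | x < α ∧
    ∃ n < rho2 C α β, x = sSup (C (walk C α β n) ∩ Set.Iio α)}

/-- The set of accumulation points of `s` that belong to `s`. -/
def accSet (s : Set Ordinal) : Set Ordinal :=
  {δ ∈ s | 0 < δ ∧ ∀ x < δ, ∃ y ∈ s, x < y ∧ y < δ}

/-- `c` is a closed coloring: for all `β < κ` and `i ≤ θ`, the set
`{α < β : c α β ≤ i}` contains all of its accumulation points below `β`. -/
def ClosedColoring (κ θ : Cardinal) (c : Ordinal → Ordinal → Ordinal) : Prop :=
  ∀ β < κ.ord, ∀ i ≤ θ.ord, ∀ γ < β, 0 < γ →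
    (∀ x < γ, ∃ α, x < α ∧ α < γ ∧ c α β ≤ i) → c γ β ≤ i

/-- One step of the walk: the set of candidates is nonempty and its `sInf` is a point of
`C δ` lying in `[γ, δ)`. -/
lemma csq_step {κ : Cardinal} {C : Ordinal → Set Ordinal} (hC : IsCSeq κ C)
    {δ : Ordinal} (hδ : δ < κ.ord) {γ : Ordinal} (hγ : γ < δ) :
    {x ∈ C δ | γ ≤ x}.Nonempty ∧ sInf {x ∈ C δ | γ ≤ x} ∈ C δ ∧
      γ ≤ sInf {x ∈ C δ | γ ≤ x} ∧ sInf {x ∈ C δ | γ ≤ x} < δ := by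
  obtain ⟨h0, hsucc, hlim⟩ := hC
  rcases Ordinal.zero_or_succ_or_isSuccLimit δ with h | ⟨ξ, rfl⟩ | h
  · subst h; exact absurd hγ (not_lt_zero' (a := γ))
  · have hCδ : C (Order.succ ξ) = {ξ} := by
      rw [← Ordinal.add_one_eq_succ]; exact hsucc ξ
    have hγξ : γ ≤ ξ := Order.lt_succ_iff.mp hγ
    have hset : {x ∈ C (Order.succ ξ) | γ ≤ x} = {ξ} := by
      rw [hCδ]
      ext x
      simp only [Set.mem_setOf_eq, Set.mem_singleton_iff]
      constructor
      · rintro ⟨rfl, _⟩; rfl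
      · rintro rfl; exact ⟨rfl, hγξ⟩
    rw [hset, csInf_singleton, hCδ]
    exact ⟨⟨ξ, rfl⟩, rfl, hγξ, Order.lt_succ ξ⟩
  · obtain ⟨hsub, hunb, _⟩ := hlim δ hδ h
    obtain ⟨b, hb, hγb⟩ := hunb γ hγ
    have hne : {x ∈ C δ | γ ≤ x}.Nonempty := ⟨b, hb, hγb⟩
    have hmem := csInf_mem hne
    exact ⟨hne, hmem.1, hmem.2, hsub hmem.1⟩

/-- Along the walk from `β` down to `α`, every point lies in `[α, β]`. -/
lemma walk_bounds {κ : Cardinal} {C : Ordinal → Set Ordinal} (hC : IsCSeq κ C)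
    {α β : Ordinal} (hαβ : α < β) (hβ : β < κ.ord) :
    ∀ n, α ≤ walk C α β n ∧ walk C α β n ≤ β := by
  intro n
  induction n with
  | zero => exact ⟨hαβ.le, le_rfl⟩
  | succ n ih =>
    have heq : walk C α β (n + 1) =
        if α < walk C α β n then sInf {x ∈ C (walk C α β n) | α ≤ x} else α := rfl
    rw [heq]
    split_ifs with h
    · obtain ⟨_, _, h1, h2⟩ := csq_step hC (lt_of_le_of_lt ih.2 hβ) h
      exact ⟨h1, le_trans h2.le ih.2⟩
    · exact ⟨le_rfl, hαβ.le⟩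

/-- The walk from `β` down to `α` terminates. -/
lemma walk_terminates {κ : Cardinal} {C : Ordinal → Set Ordinal} (hC : IsCSeq κ C)
    {α β : Ordinal} (hαβ : α < β) (hβ : β < κ.ord) :
    ∃ n, walk C α β n = α := by
  obtain ⟨m, ⟨n₀, hn₀⟩, hmin⟩ := wellFounded_lt.has_min (Set.range (walk C α β)) ⟨β, 0, rfl⟩
  refine ⟨n₀, ?_⟩
  rcases eq_or_lt_of_le (walk_bounds hC hαβ hβ n₀).1 with h | h
  · exact h.symm
  · exfalso
    have hstep : walk C α β (n₀ + 1) < walk C α β n₀ := by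
      have hb := (walk_bounds hC hαβ hβ n₀).2
      obtain ⟨_, _, _, h2⟩ := csq_step hC (lt_of_le_of_lt hb hβ) h
      show (if α < walk C α β n₀ then sInf {x ∈ C (walk C α β n₀) | α ≤ x} else α) < _
      rw [if_pos h]; exact h2
    rw [hn₀] at hstep
    exact hmin _ ⟨n₀ + 1, rfl⟩ hstep

theorem stmt12 (κ : Cardinal) (C : Ordinal → Set Ordinal)
    (hκreg : κ.IsRegular) (hκunc : ℵ₀ < κ) (hC : IsCSeq κ C) :
    ∀ β < κ.ord, ∀ i : ℕ, ∀ A : Set Ordinal,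
      (∀ α ∈ A, α < β ∧ rho2 C α β ≤ i) →
      ∀ γ, γ = sSup A → γ < β → 0 < γ →
        (∀ x < γ, ∃ δ ∈ A, x < δ ∧ δ < γ) → rho2 C γ β ≤ i := by
  intro β hβ i A hA γ _ hγβ hγ0 hacc
  set w : ℕ → Ordinal := walk C γ β with hw
  set k : ℕ := rho2 C γ β with hk
  -- basic facts about the walk from β to γ
  have hterm : {n : ℕ | w n = γ}.Nonempty := walk_terminates hC hγβ hβ
  have hwk : w k = γ := Nat.sInf_mem hterm
  have hlt : ∀ n < k, γ < w n := by
    intro n hn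
    rcases eq_or_lt_of_le (walk_bounds hC hγβ hβ n).1 with h | h
    · exact absurd h.symm (Nat.notMem_of_lt_sInf hn)
    · exact h
  -- for each m with m+1 < k, γ is not an accumulation point of C (w m)
  have hnotacc : ∀ m, m + 1 < k → ∃ b < γ, ∀ x ∈ C (w m), x < γ → x ≤ b := by
    intro m hm
    by_contra hcon
    push_neg at hcon
    have hstep : ∀ b < γ, ∃ x ∈ C (w m), b < x ∧ x < γ := by
      intro b hb
      obtain ⟨x, hx, hxγ, hbx⟩ := hcon b hb
      exact ⟨x, hx, hbx, hxγ⟩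
    have hwm : γ < w m := hlt m (Nat.lt_of_succ_lt hm)
    have hwmκ : w m < κ.ord := lt_of_le_of_lt (walk_bounds hC hγβ hβ m).2 hβ
    have hγmem : γ ∈ C (w m) := by
      rcases Ordinal.zero_or_succ_or_isSuccLimit (w m) with h | ⟨ξ, hξ⟩ | h
      · exact absurd (h ▸ hwm) (not_lt_zero' (a := γ))
      · exfalso
        have hCδ : C (w m) = {ξ} := by
          rw [← hξ, ← Ordinal.add_one_eq_succ]; exact hC.2.1 ξ
        obtain ⟨x, hx, _, hxγ⟩ := hstep 0 hγ0
        rw [hCδ] at hx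
        obtain ⟨y, hy, hxy, _⟩ := hstep x hxγ
        rw [hCδ] at hy
        rw [hx, hy] at hxy
        exact lt_irrefl ξ hxy
      · obtain ⟨_, _, hclosed⟩ := hC.2.2 (w m) hwmκ h
        exact hclosed γ hwm hγ0 (fun x hx => by
          obtain ⟨y, hy, hxy, hyγ⟩ := hstep x hx
          exact ⟨y, hy, hxy, hyγ⟩)
    have : w (m + 1) = γ := by
      show (if γ < w m then sInf {x ∈ C (w m) | γ ≤ x} else γ) = γ
      rw [if_pos hwm]
      refine le_antisymm (csInf_le' ⟨hγmem, le_rfl⟩) ?_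
      exact le_csInf ⟨γ, hγmem, le_rfl⟩ (fun x hx => hx.2)
    exact absurd this (ne_of_gt (hlt (m + 1) hm))
  -- a single bound b < γ working for all m with m+1 < k
  have hbound : ∀ j : ℕ, ∃ b < γ, ∀ m < j, m + 1 < k →
      ∀ x ∈ C (w m), x < γ → x ≤ b := by
    intro j
    induction j with
    | zero => exact ⟨0, hγ0, fun m hm => absurd hm (Nat.not_lt_zero m)⟩
    | succ j ih =>
      obtain ⟨b, hb, hbp⟩ := ih
      by_cases hj : j + 1 < k
      · obtain ⟨b', hb', hbp'⟩ := hnotacc j hj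
        refine ⟨max b b', max_lt hb hb', fun m hm hmk x hx hxγ => ?_⟩
        rcases Nat.lt_succ_iff_lt_or_eq.mp hm with h | rfl
        · exact le_trans (hbp m h hmk x hx hxγ) (le_max_left b b')
        · exact le_trans (hbp' x hx hxγ) (le_max_right b b')
      · refine ⟨b, hb, fun m hm hmk x hx hxγ => ?_⟩
        rcases Nat.lt_succ_iff_lt_or_eq.mp hm with h | rfl
        · exact hbp m h hmk x hx hxγ
        · exact absurd hmk hj
  obtain ⟨b, hb, hbp⟩ := hbound k
  -- pick α ∈ A above the bound
  obtain ⟨α, hαA, hbα, hαγ⟩ := hacc b hb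
  obtain ⟨hαβ, hραi⟩ := hA α hαA
  -- the walk from β to α agrees with the walk from β to γ for the first k steps
  have hagree : ∀ n < k, walk C α β n = w n := by
    intro n hn
    induction n with
    | zero => rfl
    | succ n ih =>
      have hn' : n < k := Nat.lt_of_succ_lt hn
      have ihh := ih hn'
      have hγn : γ < w n := hlt n hn'
      have hαn : α < w n := lt_trans hαγ hγn
      have hseteq : {x ∈ C (w n) | α ≤ x} = {x ∈ C (w n) | γ ≤ x} := by
        ext x
        simp only [Set.mem_setOf_eq]
        constructor
        · rintro ⟨hx, hαx⟩
          refine ⟨hx, ?_⟩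
          by_contra hxγ
          have := hbp n hn' hn x hx (lt_of_not_ge hxγ)
          exact absurd hαx (not_le_of_gt (lt_of_le_of_lt this hbα))
        · rintro ⟨hx, hγx⟩
          exact ⟨hx, le_trans hαγ.le hγx⟩
      show (if α < walk C α β n then sInf {x ∈ C (walk C α β n) | α ≤ x} else α) = w (n + 1)
      rw [ihh, if_pos hαn, hseteq]
      show _ = (if γ < w n then sInf {x ∈ C (w n) | γ ≤ x} else γ)
      rw [if_pos hγn]
  -- hence ρ₂(α,β) ≥ k, and so k ≤ i
  have hterm' : {n : ℕ | walk C α β n = α}.Nonempty := walk_terminates hC hαβ hβ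
  have hkle : k ≤ rho2 C α β := by
    by_contra h
    push_neg at h
    have hmem : walk C α β (rho2 C α β) = α := Nat.sInf_mem hterm'
    have := hagree (rho2 C α β) h
    rw [hmem] at this
    exact absurd this.symm (ne_of_gt (lt_trans hαγ (hlt _ h)))
  exact le_trans hkle hραi
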